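/- Cheeger's inequality for multigraphs: for a finite connected multigraph G, the spectral gap λ (second-smallest eigenvalue of the normalized Laplacian) and the conductance φ(G) satisfy λ ≥ φ(G)²/2. -/

import Mathlib

/-- Degree of a vertex in a multigraph with multiplicities `w`. -/
noncomputable def degRe {V : Type} [Fintype V] (w : V → V → ℕ) (v : V) : ℝ :=
  ∑ u, (w v u : ℝ)

/-- The normalized Laplacian of the multigraph with edge multiplicities `w`. -/
noncomputable def normLap {V : Type} [Fintype V] [DecidableEq V] (w : V → V → ℕ) :
    Matrix V V ℝ :=
  Matrix.of fun u v =>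
    if u = v then (if degRe w v = 0 then 0 else 1 - (w v v : ℝ) / degRe w v)
    else -(w u v : ℝ) / Real.sqrt (degRe w u * degRe w v)

/-- Second-smallest eigenvalue of a Hermitian real matrix: entry `1` of the list of
eigenvalues sorted increasingly. -/
noncomputable def secondSmallest {V : Type} [Fintype V] [DecidableEq V]
    {M : Matrix V V ℝ} (hM : M.IsHermitian) : ℝ :=
  (Multiset.sort ((Finset.univ.val : Multiset V).map hM.eigenvalues) (· ≤ ·)).getD 1 0

/-- Volume of a vertex subset: sum of degrees. -/
noncomputable def vol {V : Type} [Fintype V] (w : V → V → ℕ) (S : Finset V) : ℝ :=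
  ∑ v ∈ S, ∑ u, (w v u : ℝ)

/-- Number of edges crossing the cut `(S, S̄)`. -/
noncomputable def cutVal {V : Type} [Fintype V] [DecidableEq V] (w : V → V → ℕ)
    (S : Finset V) : ℝ :=
  ∑ u ∈ S, ∑ v ∈ Sᶜ, (w u v : ℝ)

/-- Conductance `φ(G) = min { |E(S,S̄)|/vol(S) : vol(S) ≤ vol(V)/2 }`. -/
noncomputable def conductance {V : Type} [Fintype V] [DecidableEq V]
    (w : V → V → ℕ) : ℝ :=
  sInf {r | ∃ S : Finset V, 0 < vol w S ∧ 2 * vol w S ≤ vol w Finset.univ ∧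
    r = cutVal w S / vol w S}

namespace chAux

set_option linter.unusedSectionVars false

open Finset Matrix

variable {V : Type} [Fintype V] [DecidableEq V]
variable (w : V → V → ℕ)

noncomputable def chNum (w : V → V → ℕ) (g : V → ℝ) : ℝ :=
  (1/2) * ∑ u, ∑ v, (w u v : ℝ) * (g u - g v)^2

noncomputable def chDen (w : V → V → ℕ) (g : V → ℝ) : ℝ :=
  ∑ v, degRe w v * g v ^ 2


lemma degRe_nonneg (v : V) : 0 ≤ degRe w v := by
  unfold degRe; positivity

lemma vol_eq_sum (S : Finset V) : vol w S = ∑ v ∈ S, degRe w v := rfl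

lemma vol_nonneg (S : Finset V) : 0 ≤ vol w S := by
  rw [vol_eq_sum]; exact Finset.sum_nonneg fun v _ => degRe_nonneg w v

lemma vol_mono {S T : Finset V} (h : S ⊆ T) : vol w S ≤ vol w T := by
  rw [vol_eq_sum, vol_eq_sum]
  exact Finset.sum_le_sum_of_subset_of_nonneg h (fun v _ _ => degRe_nonneg w v)

lemma cutVal_nonneg (S : Finset V) : 0 ≤ cutVal w S := by
  unfold cutVal; positivity

lemma vol_add_vol_compl (S : Finset V) : vol w S + vol w Sᶜ = vol w univ := by
  rw [vol_eq_sum, vol_eq_sum, vol_eq_sum]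
  exact (Finset.sum_add_sum_compl S _)

lemma conductance_nonneg : 0 ≤ conductance w := by
  apply Real.sInf_nonneg
  rintro r ⟨S, hS, -, rfl⟩
  exact div_nonneg (cutVal_nonneg w S) hS.le

lemma conductance_le {S : Finset V} (h1 : 0 < vol w S)
    (h2 : 2 * vol w S ≤ vol w univ) :
    conductance w * vol w S ≤ cutVal w S := by
  have hmem : cutVal w S / vol w S ∈
      {r | ∃ S : Finset V, 0 < vol w S ∧ 2 * vol w S ≤ vol w Finset.univ ∧
        r = cutVal w S / vol w S} := ⟨S, h1, h2, rfl⟩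
  have hbdd : BddBelow {r | ∃ S : Finset V, 0 < vol w S ∧
      2 * vol w S ≤ vol w Finset.univ ∧ r = cutVal w S / vol w S} := by
    refine ⟨0, ?_⟩
    rintro r ⟨S, hS, -, rfl⟩
    exact div_nonneg (cutVal_nonneg w S) hS.le
  have := csInf_le hbdd hmem
  calc conductance w * vol w S ≤ (cutVal w S / vol w S) * vol w S := by
        exact mul_le_mul_of_nonneg_right this h1.le
    _ = cutVal w S := by field_simp

lemma chNum_nonneg (g : V → ℝ) : 0 ≤ chNum w g := by
  unfold chNum; positivity

lemma row_sum (u : V) : ∑ v, (w u v : ℝ) = degRe w u := rfl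

lemma col_sum (hsym : ∀ u v, w u v = w v u) (v : V) :
    ∑ u, (w u v : ℝ) = degRe w v := by
  unfold degRe; exact Finset.sum_congr rfl fun u _ => by rw [hsym]

lemma deg_mul_div (hd : ∀ v, 0 < degRe w v) (v : V) (t : ℝ) :
    degRe w v * (t / Real.sqrt (degRe w v)) ^ 2 = t ^ 2 := by
  rw [div_pow, Real.sq_sqrt (degRe_nonneg w v), ← mul_div_assoc,
    mul_div_cancel_left₀ _ (hd v).ne']

lemma chDen_eq (hd : ∀ v, 0 < degRe w v) (x : V → ℝ) :
    chDen w (fun v => x v / Real.sqrt (degRe w v)) = ∑ v, x v ^ 2 := by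
  unfold chDen
  exact Finset.sum_congr rfl fun v _ => deg_mul_div w hd v (x v)

lemma quadform (hsym : ∀ u v, w u v = w v u) (hd : ∀ v, 0 < degRe w v) (x : V → ℝ) :
    x ⬝ᵥ (normLap w).mulVec x
      = chNum w (fun v => x v / Real.sqrt (degRe w v)) := by
  set y : V → ℝ := fun v => x v / Real.sqrt (degRe w v) with hy
  have hsq : ∀ v, Real.sqrt (degRe w v) ^ 2 = degRe w v :=
    fun v => Real.sq_sqrt (degRe_nonneg w v)
  have hsp : ∀ v, (0:ℝ) < Real.sqrt (degRe w v) :=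
    fun v => Real.sqrt_pos.2 (hd v)
  have key : ∀ u v, x u * (normLap w u v * x v)
      = (if u = v then x u ^ 2 else 0) - (w u v : ℝ) * (y u * y v) := by
    intro u v
    by_cases h : u = v
    · subst h
      simp only [normLap, Matrix.of_apply, if_pos rfl, if_neg (hd u).ne', hy, ↓reduceIte]
      have h1 : degRe w u ≠ 0 := (hd u).ne'
      have h2 : x u / Real.sqrt (degRe w u) * (x u / Real.sqrt (degRe w u))
          = x u ^ 2 / degRe w u := by
        rw [div_mul_div_comm, Real.mul_self_sqrt (degRe_nonneg w u), sq]
      rw [h2]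
      field_simp
    · simp only [normLap, Matrix.of_apply, if_neg h, hy]
      rw [Real.sqrt_mul (degRe_nonneg w u)]
      have h1 : Real.sqrt (degRe w u) ≠ 0 := (hsp u).ne'
      have h2 : Real.sqrt (degRe w v) ≠ 0 := (hsp v).ne'
      field_simp
      ring
  have lhs : x ⬝ᵥ (normLap w).mulVec x = ∑ u, ∑ v, x u * (normLap w u v * x v) := by
    simp [dotProduct, Matrix.mulVec, Finset.mul_sum]
  rw [lhs]
  have lhs2 : ∑ u, ∑ v, x u * (normLap w u v * x v)
      = (∑ u, x u ^ 2) - ∑ u, ∑ v, (w u v : ℝ) * (y u * y v) := by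
    rw [← Finset.sum_sub_distrib]
    refine Finset.sum_congr rfl fun u _ => ?_
    rw [Finset.sum_congr rfl fun v _ => key u v, Finset.sum_sub_distrib]
    congr 1
    simp
  rw [lhs2]
  have hdy : ∀ v, degRe w v * y v ^ 2 = x v ^ 2 := fun v => deg_mul_div w hd v (x v)
  unfold chNum
  have expand : ∀ u v : V, (w u v : ℝ) * (y u - y v)^2
      = (w u v : ℝ) * y u ^ 2 + (w u v : ℝ) * y v ^ 2 - 2 * ((w u v : ℝ) * (y u * y v)) := by
    intro u v; ring
  have e1 : ∑ u, ∑ v, (w u v : ℝ) * y u ^ 2 = ∑ u, x u ^ 2 := by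
    refine Finset.sum_congr rfl fun u _ => ?_
    rw [← Finset.sum_mul, row_sum, hdy]
  have e2 : ∑ u, ∑ v, (w u v : ℝ) * y v ^ 2 = ∑ u, x u ^ 2 := by
    rw [Finset.sum_comm]
    refine Finset.sum_congr rfl fun v _ => ?_
    rw [← Finset.sum_mul, col_sum w hsym, hdy]
  calc (∑ u, x u ^ 2) - ∑ u, ∑ v, (w u v : ℝ) * (y u * y v)
      = (1/2) * ((∑ u, ∑ v, (w u v : ℝ) * y u ^ 2) + (∑ u, ∑ v, (w u v : ℝ) * y v ^ 2)
          - 2 * ∑ u, ∑ v, (w u v : ℝ) * (y u * y v)) := by rw [e1, e2]; ring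
    _ = (1/2) * ∑ u, ∑ v, (w u v : ℝ) * (y u - y v)^2 := by
        congr 1
        rw [← Finset.sum_add_distrib]
        rw [Finset.mul_sum, ← Finset.sum_sub_distrib]
        refine Finset.sum_congr rfl fun u _ => ?_
        rw [← Finset.sum_add_distrib, Finset.mul_sum, ← Finset.sum_sub_distrib]
        exact Finset.sum_congr rfl fun v _ => (expand u v).symm

lemma exists_test {M : Matrix V V ℝ} (hM : M.IsHermitian) (hcard : 2 ≤ Fintype.card V)
    (y : V → ℝ) :
    ∃ x : V → ℝ, x ≠ 0 ∧ (∑ v, y v * x v) = 0 ∧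
      x ⬝ᵥ M.mulVec x ≤ secondSmallest hM * ∑ v, x v ^ 2 := by
  classical
  set l := Multiset.sort ((Finset.univ.val : Multiset V).map hM.eigenvalues) (· ≤ ·) with hldef
  have hlen : l.length = Fintype.card V := by
    rw [hldef, Multiset.length_sort, Multiset.card_map]
    rfl
  have hsort : List.Pairwise (· ≤ ·) l := Multiset.pairwise_sort _ _
  have hcoe : (l : Multiset ℝ) = (Finset.univ.val : Multiset V).map hM.eigenvalues :=
    Multiset.sort_eq _ _
  rcases hl : l with _ | ⟨a, _ | ⟨b, t⟩⟩
  · rw [hl] at hlen; simp at hlen; omega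
  · rw [hl] at hlen; simp at hlen; omega
  rw [hl] at hsort hcoe
  have hab : a ≤ b := (List.pairwise_cons.1 hsort).1 b (by simp)
  have hmu : secondSmallest hM = b := by
    unfold secondSmallest; rw [← hldef, hl]; rfl
  -- extract two distinct indices
  have hm1 : Multiset.map hM.eigenvalues (Finset.univ.val : Multiset V)
      = a ::ₘ (b ::ₘ (t : Multiset ℝ)) := by
    rw [← hcoe]; rfl
  obtain ⟨v1, hv1mem, hv1, hrest⟩ := (Multiset.map_eq_cons _ _ _ _).2 hm1
  obtain ⟨v2, hv2mem, hv2, -⟩ := (Multiset.map_eq_cons _ _ _ _).2 hrest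
  have hne : v2 ≠ v1 :=
    ((Finset.univ.nodup.mem_erase_iff).1 hv2mem).1
  have hev1 : hM.eigenvalues v1 ≤ secondSmallest hM := by rw [hmu, hv1]; exact hab
  have hev2 : hM.eigenvalues v2 ≤ secondSmallest hM := by rw [hmu, hv2]
  -- orthonormal basis facts
  set B : V → V → ℝ := fun i => ⇑(hM.eigenvectorBasis i) with hB
  have hortho : ∀ i j : V, (∑ v, B i v * B j v) = if i = j then 1 else 0 := by
    intro i j
    have h := hM.eigenvectorBasis.orthonormal
    rw [orthonormal_iff_ite] at h
    have h2 := h i j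
    rw [PiLp.inner_apply] at h2
    simp at h2
    rw [← h2]
    refine Finset.sum_congr rfl fun v _ => ?_
    rw [mul_comm]
  have hmv : ∀ j : V, M.mulVec (B j) = fun v => hM.eigenvalues j * B j v := by
    intro j
    have := hM.mulVec_eigenvectorBasis j
    exact this
  set a1 := ∑ v, y v * B v1 v with ha1
  set a2 := ∑ v, y v * B v2 v with ha2
  obtain ⟨c1, c2, hc, hyc⟩ : ∃ c1 c2 : ℝ, ¬(c1 = 0 ∧ c2 = 0) ∧ c1 * a1 + c2 * a2 = 0 := by
    by_cases hz : a1 = 0 ∧ a2 = 0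
    · exact ⟨1, 0, by simp, by simp [hz.1]⟩
    · refine ⟨a2, -a1, fun h => hz ⟨by linarith [h.2], h.1⟩, by ring⟩
  refine ⟨fun v => c1 * B v1 v + c2 * B v2 v, ?_, ?_, ?_⟩
  · intro h0
    have h1 : ∑ v, (c1 * B v1 v + c2 * B v2 v) * B v1 v = c1 := by
      rw [Finset.sum_congr rfl (fun v _ => by ring :
        ∀ v ∈ univ, (c1 * B v1 v + c2 * B v2 v) * B v1 v
          = c1 * (B v1 v * B v1 v) + c2 * (B v2 v * B v1 v))]
      rw [Finset.sum_add_distrib, ← Finset.mul_sum, ← Finset.mul_sum,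
        hortho v1 v1, hortho v2 v1, if_pos rfl, if_neg hne]
      ring
    have h2 : ∑ v, (c1 * B v1 v + c2 * B v2 v) * B v2 v = c2 := by
      rw [Finset.sum_congr rfl (fun v _ => by ring :
        ∀ v ∈ univ, (c1 * B v1 v + c2 * B v2 v) * B v2 v
          = c1 * (B v1 v * B v2 v) + c2 * (B v2 v * B v2 v))]
      rw [Finset.sum_add_distrib, ← Finset.mul_sum, ← Finset.mul_sum,
        hortho v1 v2, hortho v2 v2, if_pos rfl, if_neg (Ne.symm hne)]
      ring
    apply hc
    constructor
    · rw [← h1]; rw [funext_iff] at h0; simp [h0]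
    · rw [← h2]; rw [funext_iff] at h0; simp [h0]
  · rw [Finset.sum_congr rfl (fun v _ => by ring :
      ∀ v ∈ univ, y v * (c1 * B v1 v + c2 * B v2 v)
        = c1 * (y v * B v1 v) + c2 * (y v * B v2 v))]
    rw [Finset.sum_add_distrib, ← Finset.mul_sum, ← Finset.mul_sum, ← ha1, ← ha2]
    exact hyc
  · set x : V → ℝ := fun v => c1 * B v1 v + c2 * B v2 v with hx
    have hmx : M.mulVec x = fun v => c1 * (hM.eigenvalues v1 * B v1 v)
        + c2 * (hM.eigenvalues v2 * B v2 v) := by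
      have hlin : M.mulVec x = fun v =>
          c1 * (M.mulVec (B v1) v) + c2 * (M.mulVec (B v2) v) := by
        funext u
        simp only [Matrix.mulVec, dotProduct, hx, Finset.mul_sum,
          ← Finset.sum_add_distrib]
        exact Finset.sum_congr rfl fun v _ => by ring
      rw [hlin, hmv v1, hmv v2]
    have hQ : x ⬝ᵥ M.mulVec x
        = c1^2 * hM.eigenvalues v1 + c2^2 * hM.eigenvalues v2 := by
      rw [hmx]
      show ∑ v, x v * _ = _
      rw [Finset.sum_congr rfl (fun v _ => by simp only [hx]; ring :
        ∀ v ∈ univ, x v * (c1 * (hM.eigenvalues v1 * B v1 v)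
            + c2 * (hM.eigenvalues v2 * B v2 v))
          = (c1^2 * hM.eigenvalues v1) * (B v1 v * B v1 v)
            + (c2^2 * hM.eigenvalues v2) * (B v2 v * B v2 v)
            + (c1 * c2 * (hM.eigenvalues v1 + hM.eigenvalues v2)) * (B v1 v * B v2 v))]
      rw [Finset.sum_add_distrib, Finset.sum_add_distrib,
        ← Finset.mul_sum, ← Finset.mul_sum, ← Finset.mul_sum,
        hortho v1 v1, hortho v2 v2, hortho v1 v2,
        if_pos rfl, if_pos rfl, if_neg (Ne.symm hne)]
      ring
    have hden : ∑ v, x v ^ 2 = c1^2 + c2^2 := by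
      rw [Finset.sum_congr rfl (fun v _ => by simp only [hx]; ring :
        ∀ v ∈ univ, x v ^ 2
          = c1^2 * (B v1 v * B v1 v) + c2^2 * (B v2 v * B v2 v)
            + (2*c1*c2) * (B v1 v * B v2 v))]
      rw [Finset.sum_add_distrib, Finset.sum_add_distrib,
        ← Finset.mul_sum, ← Finset.mul_sum, ← Finset.mul_sum,
        hortho v1 v1, hortho v2 v2, hortho v1 v2,
        if_pos rfl, if_pos rfl, if_neg (Ne.symm hne)]
      ring
    rw [hQ, hden]
    nlinarith [sq_nonneg c1, sq_nonneg c2, hev1, hev2]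

lemma exists_median [Nonempty V] (g : V → ℝ) :
    ∃ c : ℝ, 2 * vol w (univ.filter (fun v => c < g v)) ≤ vol w univ ∧
      2 * vol w (univ.filter (fun v => g v < c)) ≤ vol w univ := by
  classical
  set A : Finset ℝ := (univ.image g).filter
    (fun t => vol w univ ≤ 2 * vol w (univ.filter fun v => t ≤ g v)) with hA
  have himg : (univ.image g).Nonempty := by
    simpa using Finset.univ_nonempty (α := V)
  have hAne : A.Nonempty := by
    refine ⟨(univ.image g).min' himg, ?_⟩
    rw [hA, Finset.mem_filter]
    refine ⟨Finset.min'_mem _ _, ?_⟩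
    have : (univ.filter fun v => (univ.image g).min' himg ≤ g v) = univ := by
      apply Finset.filter_true_of_mem
      intro v _
      exact Finset.min'_le _ _ (Finset.mem_image_of_mem g (Finset.mem_univ v))
    rw [this]
    nlinarith [vol_nonneg w (univ : Finset V)]
  set c := A.max' hAne with hc
  have hcA : c ∈ A := A.max'_mem hAne
  rw [hA, Finset.mem_filter] at hcA
  refine ⟨c, ?_, ?_⟩
  · -- upper side
    set S := univ.filter (fun v => c < g v) with hS
    rcases S.eq_empty_or_nonempty with he | hne
    · rw [he]
      have : vol w (∅ : Finset V) = 0 := by simp [vol]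
      rw [this]
      nlinarith [vol_nonneg w (univ : Finset V)]
    · have hSimg : (S.image g).Nonempty := hne.image g
      set t1 := (S.image g).min' hSimg with ht1
      obtain ⟨v1, hv1S, hv1⟩ := Finset.mem_image.1 ((S.image g).min'_mem hSimg)
      have hct1 : c < t1 := by
        rw [ht1, ← hv1]; exact (Finset.mem_filter.1 hv1S).2
      have hfilter : (univ.filter fun v => t1 ≤ g v) = S := by
        ext v
        simp only [Finset.mem_filter, Finset.mem_univ, true_and, hS]
        constructor
        · intro h; exact lt_of_lt_of_le hct1 h
        · intro h
          exact Finset.min'_le _ _ (Finset.mem_image_of_mem g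
            (by rw [hS]; simp [h]))
      by_contra hcon
      push_neg at hcon
      have ht1A : t1 ∈ A := by
        rw [hA, Finset.mem_filter]
        refine ⟨?_, by rw [hfilter]; linarith⟩
        rw [ht1, ← hv1]
        exact Finset.mem_image_of_mem g (Finset.mem_univ v1)
      have := A.le_max' t1 ht1A
      rw [← hc] at this
      linarith
  · -- lower side
    have hpart : vol w (univ.filter (fun v => g v < c))
        + vol w (univ.filter (fun v => c ≤ g v)) = vol w univ := by
      have : (univ.filter (fun v => g v < c))ᶜ = univ.filter (fun v => c ≤ g v) := by
        ext v; simp [not_lt]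
      rw [← this]
      exact vol_add_vol_compl w _
    have h2 := hcA.2
    linarith

lemma sweep (hsym : ∀ u v, w u v = w v u) (hd : ∀ v, 0 < degRe w v) [Nonempty V]
    (f : V → ℝ) (hf0 : ∀ v, 0 ≤ f v)
    (hsupp : 2 * vol w (univ.filter fun v => 0 < f v) ≤ vol w univ) :
    conductance w * chDen w f ≤ (1/2) * ∑ u, ∑ v, (w u v : ℝ) * |f u ^ 2 - f v ^ 2| := by
  classical
  set n := Fintype.card V with hn
  have hn0 : 0 < n := Fintype.card_pos
  set e0 : V ≃ Fin n := Fintype.equivFin V with he0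
  set t : Fin n → ℝ := f ∘ ⇑e0.symm with ht
  set e : Fin n ≃ V := (Tuple.sort t).trans e0.symm with he
  set g : Fin n → ℝ := fun i => f (e i) with hg
  have hmono : Monotone g := Tuple.monotone_sort t
  have hgnn : ∀ i, 0 ≤ g i := fun i => hf0 _
  set p : ℕ → ℝ := fun k => if h : k < n then g ⟨k, h⟩ ^ 2 else 0 with hp
  have hpFin : ∀ i : Fin n, p (i : ℕ) = g i ^ 2 := by
    intro i; simp only [hp, dif_pos i.isLt]
  have hpmono : ∀ i j : Fin n, i ≤ j → p i ≤ p j := by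
    intro i j hij
    rw [hpFin, hpFin]
    exact pow_le_pow_left₀ (hgnn i) (hmono hij) 2
  -- volume of univ is positive
  have hvolU : 0 < vol w univ := by
    rw [vol_eq_sum]
    exact Finset.sum_pos (fun v _ => hd v) univ_nonempty
  -- a vertex with f = 0
  have hzero : ∃ v0, f v0 = 0 := by
    by_contra hcon
    push_neg at hcon
    have : (univ.filter fun v => 0 < f v) = univ := by
      apply Finset.filter_true_of_mem
      intro v _; exact lt_of_le_of_ne (hf0 v) (Ne.symm (hcon v))
    rw [this] at hsupp
    linarith
  have hp0 : p 0 = 0 := by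
    obtain ⟨v0, hv0⟩ := hzero
    have h1 : g ⟨0, hn0⟩ ≤ g (e.symm v0) := hmono (by rw [Fin.le_def]; exact Nat.zero_le _)
    have h2 : g (e.symm v0) = 0 := by
      show f (e (e.symm v0)) = 0
      rw [Equiv.apply_symm_apply, hv0]
    have h3 : g ⟨0, hn0⟩ = 0 := le_antisymm (h2 ▸ h1) (hgnn _)
    have : p 0 = g ⟨0, hn0⟩ ^ 2 := by simp only [hp, dif_pos hn0]
    rw [this, h3]; ring
  -- the sweep sets
  set T : ℕ → Finset V := fun k => univ.filter (fun v => k < ((e.symm v : Fin n) : ℕ))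
    with hT
  -- telescoping lemma
  have tele : ∀ a b : ℕ, a ≤ b → b ≤ n →
      ∑ k ∈ range n, (p (k+1) - p k) * (if a ≤ k ∧ k < b then 1 else 0)
        = p b - p a := by
    intro a b hab hbn
    have h1 : ∑ k ∈ range n, (p (k+1) - p k) * (if a ≤ k ∧ k < b then 1 else 0)
        = ∑ k ∈ (range n).filter (fun k => a ≤ k ∧ k < b), (p (k+1) - p k) := by
      rw [Finset.sum_filter]
      exact Finset.sum_congr rfl fun k _ => by split <;> simp
    have h2 : (range n).filter (fun k => a ≤ k ∧ k < b) = Finset.Ico a b := by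
      ext k; simp only [Finset.mem_filter, Finset.mem_range, Finset.mem_Ico]
      omega
    rw [h1, h2, Finset.sum_Ico_eq_sub _ hab, Finset.sum_range_sub, Finset.sum_range_sub]
    ring
  -- cut identity
  have cutid : ∀ k : ℕ, cutVal w (T k)
      = ∑ i, ∑ j, (w (e i) (e j) : ℝ) * (if (i:ℕ) ≤ k ∧ k < (j:ℕ) then 1 else 0) := by
    intro k
    have hcompl : (T k)ᶜ = univ.filter (fun v => ¬ k < ((e.symm v : Fin n) : ℕ)) := by
      ext v; simp [hT]
    unfold cutVal
    rw [hcompl, hT]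
    rw [Finset.sum_filter]
    have inner : ∀ u : V, (if k < ((e.symm u : Fin n) : ℕ) then
        (∑ v ∈ univ.filter (fun v => ¬ k < ((e.symm v : Fin n) : ℕ)), (w u v : ℝ)) else 0)
        = ∑ v, (if k < ((e.symm u : Fin n) : ℕ) then 1 else 0)
            * ((if ¬ k < ((e.symm v : Fin n) : ℕ) then 1 else 0) * (w u v : ℝ)) := by
      intro u
      rw [Finset.sum_filter]
      split
      · refine Finset.sum_congr rfl fun v _ => ?_
        split <;> simp
      · simp
    rw [Finset.sum_congr rfl fun u _ => inner u]
    -- reindex u = e j, v = e i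
    rw [← Equiv.sum_comp e (fun u => ∑ v, (if k < ((e.symm u : Fin n) : ℕ) then (1:ℝ) else 0)
      * ((if ¬ k < ((e.symm v : Fin n) : ℕ) then 1 else 0) * (w u v : ℝ)))]
    have step : ∀ j : Fin n, ∑ v, (if k < ((e.symm (e j) : Fin n) : ℕ) then (1:ℝ) else 0)
        * ((if ¬ k < ((e.symm v : Fin n) : ℕ) then 1 else 0) * (w (e j) v : ℝ))
        = ∑ i : Fin n, (if k < (j:ℕ) then (1:ℝ) else 0)
            * ((if ¬ k < (i:ℕ) then 1 else 0) * (w (e j) (e i) : ℝ)) := by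
      intro j
      rw [← Equiv.sum_comp e (fun v => (if k < ((e.symm (e j) : Fin n) : ℕ) then (1:ℝ) else 0)
        * ((if ¬ k < ((e.symm v : Fin n) : ℕ) then 1 else 0) * (w (e j) v : ℝ)))]
      simp only [Equiv.symm_apply_apply]
    rw [Finset.sum_congr rfl fun j _ => step j]
    rw [Finset.sum_comm]
    refine Finset.sum_congr rfl fun i _ => Finset.sum_congr rfl fun j _ => ?_
    rw [hsym (e j) (e i)]
    by_cases h1 : (i:ℕ) ≤ k
    · by_cases h2 : k < (j:ℕ)
      · rw [if_pos h2, if_pos (not_lt.2 h1), if_pos ⟨h1, h2⟩]; ring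
      · rw [if_neg h2,
          if_neg (show ¬((i:ℕ) ≤ k ∧ k < (j:ℕ)) from fun hc => h2 hc.2)]; ring
    · rw [if_neg (not_not_intro (not_le.1 h1)),
        if_neg (show ¬((i:ℕ) ≤ k ∧ k < (j:ℕ)) from fun hc => h1 hc.1)]; ring
  -- vol identity
  have volid : ∀ k : ℕ, vol w (T k)
      = ∑ j : Fin n, degRe w (e j) * (if k < (j:ℕ) then 1 else 0) := by
    intro k
    rw [vol_eq_sum]
    show ∑ v ∈ univ.filter (fun v => k < ((e.symm v : Fin n) : ℕ)), degRe w v = _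
    rw [Finset.sum_filter]
    rw [← Equiv.sum_comp e (fun v => if k < ((e.symm v : Fin n):ℕ) then degRe w v else 0)]
    refine Finset.sum_congr rfl fun j _ => ?_
    simp only [Equiv.symm_apply_apply]
    split <;> simp
  set a : ℕ → ℝ := fun k => p (k+1) - p k with ha
  -- step2 : per-pair telescoping
  have step2 : ∀ i j : Fin n, |p (j:ℕ) - p (i:ℕ)|
      = (∑ k ∈ range n, a k * (if (i:ℕ) ≤ k ∧ k < (j:ℕ) then 1 else 0))
        + (∑ k ∈ range n, a k * (if (j:ℕ) ≤ k ∧ k < (i:ℕ) then 1 else 0)) := by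
    intro i j
    rcases le_total i j with hij | hij
    · have hijn : (i:ℕ) ≤ (j:ℕ) := hij
      have h1 := tele i j hijn j.isLt.le
      have h2 : ∑ k ∈ range n, a k * (if (j:ℕ) ≤ k ∧ k < (i:ℕ) then 1 else 0) = 0 :=
        Finset.sum_eq_zero fun k _ => by
          rw [if_neg (by omega : ¬((j:ℕ) ≤ k ∧ k < (i:ℕ)))]; ring
      rw [abs_of_nonneg (sub_nonneg.2 (hpmono i j hij)), h1, h2, add_zero]
    · have hijn : (j:ℕ) ≤ (i:ℕ) := hij
      have h1 := tele j i hijn i.isLt.le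
      have h2 : ∑ k ∈ range n, a k * (if (i:ℕ) ≤ k ∧ k < (j:ℕ) then 1 else 0) = 0 :=
        Finset.sum_eq_zero fun k _ => by
          rw [if_neg (by omega : ¬((i:ℕ) ≤ k ∧ k < (j:ℕ)))]; ring
      rw [abs_of_nonpos (sub_nonpos.2 (hpmono j i hij)), h1, h2, zero_add]
      ring
  -- step1 : reindex the double sum
  have step1 : (1/2) * ∑ u, ∑ v, (w u v : ℝ) * |f u ^ 2 - f v ^ 2|
      = (1/2) * ∑ i : Fin n, ∑ j : Fin n, (w (e i) (e j) : ℝ) * |p (j:ℕ) - p (i:ℕ)| := by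
    congr 1
    rw [← Equiv.sum_comp e (fun u => ∑ v, (w u v : ℝ) * |f u ^2 - f v ^2|)]
    refine Finset.sum_congr rfl fun i _ => ?_
    rw [← Equiv.sum_comp e (fun v => (w (e i) v : ℝ) * |f (e i) ^2 - f v ^2|)]
    refine Finset.sum_congr rfl fun j _ => ?_
    rw [hpFin, hpFin]
    show (w (e i) (e j) : ℝ) * |f (e i) ^ 2 - f (e j) ^ 2|
      = (w (e i) (e j) : ℝ) * |f (e j) ^ 2 - f (e i) ^ 2|
    rw [abs_sub_comm]
  -- main identity : M = ∑ k a k * cut (T k)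
  have main : (1/2) * ∑ u, ∑ v, (w u v:ℝ) * |f u^2 - f v^2|
      = ∑ k ∈ range n, a k * cutVal w (T k) := by
    rw [step1]
    have expand : ∀ i j : Fin n, (w (e i) (e j) : ℝ) * |p (j:ℕ) - p (i:ℕ)|
        = (w (e i) (e j) : ℝ) * (∑ k ∈ range n, a k * (if (i:ℕ) ≤ k ∧ k < (j:ℕ) then 1 else 0))
          + (w (e i) (e j) : ℝ) * (∑ k ∈ range n, a k * (if (j:ℕ) ≤ k ∧ k < (i:ℕ) then 1 else 0)) := by
      intro i j; rw [step2 i j]; ring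
    rw [Finset.sum_congr rfl fun i _ => Finset.sum_congr rfl fun j _ => expand i j]
    rw [Finset.sum_congr rfl fun i (_ : i ∈ univ) => Finset.sum_add_distrib]
    rw [Finset.sum_add_distrib]
    have swap2 : ∑ i : Fin n, ∑ j : Fin n, (w (e i) (e j) : ℝ)
          * (∑ k ∈ range n, a k * (if (j:ℕ) ≤ k ∧ k < (i:ℕ) then 1 else 0))
        = ∑ i : Fin n, ∑ j : Fin n, (w (e i) (e j) : ℝ)
          * (∑ k ∈ range n, a k * (if (i:ℕ) ≤ k ∧ k < (j:ℕ) then 1 else 0)) := by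
      rw [Finset.sum_comm]
      refine Finset.sum_congr rfl fun i _ => Finset.sum_congr rfl fun j _ => ?_
      rw [hsym (e j) (e i)]
    rw [swap2, ← two_mul]
    have pull : ∑ i : Fin n, ∑ j : Fin n, (w (e i) (e j) : ℝ)
          * (∑ k ∈ range n, a k * (if (i:ℕ) ≤ k ∧ k < (j:ℕ) then 1 else 0))
        = ∑ k ∈ range n, a k * cutVal w (T k) := by
      have h1 : ∀ i j : Fin n, (w (e i) (e j) : ℝ)
            * (∑ k ∈ range n, a k * (if (i:ℕ) ≤ k ∧ k < (j:ℕ) then 1 else 0))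
          = ∑ k ∈ range n, a k * ((w (e i) (e j) : ℝ)
              * (if (i:ℕ) ≤ k ∧ k < (j:ℕ) then 1 else 0)) := by
        intro i j
        rw [Finset.mul_sum]
        exact Finset.sum_congr rfl fun k _ => by ring
      rw [Finset.sum_congr rfl fun i (_ : i ∈ univ) =>
        Finset.sum_congr rfl fun j (_ : j ∈ univ) => h1 i j]
      rw [Finset.sum_congr rfl fun i (_ : i ∈ univ) => Finset.sum_comm (s := univ)
        (t := range n) (f := fun j k => a k * ((w (e i) (e j) : ℝ)
          * (if (i:ℕ) ≤ k ∧ k < (j:ℕ) then 1 else 0)))]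
      rw [Finset.sum_comm]
      refine Finset.sum_congr rfl fun k _ => ?_
      rw [cutid k, Finset.mul_sum]
      refine Finset.sum_congr rfl fun i _ => ?_
      rw [Finset.mul_sum]
    rw [pull]
    ring
  -- per-k comparison
  have step5 : ∀ k ∈ range n, conductance w * (a k * vol w (T k)) ≤ a k * cutVal w (T k) := by
    intro k hk
    have hkn : k < n := Finset.mem_range.1 hk
    by_cases hk1 : k + 1 < n
    · have hanneg : 0 ≤ a k := by
        have := hpmono ⟨k, hkn⟩ ⟨k+1, hk1⟩ (by rw [Fin.mk_le_mk]; omega)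
        simpa [ha] using sub_nonneg.2 this
      rcases eq_or_lt_of_le hanneg with heq | hpos
      · rw [← heq]; simp
      · have hpk1 : p (k+1) = g ⟨k+1, hk1⟩ ^ 2 := by simp only [hp, dif_pos hk1]
        have hpk : p k = g ⟨k, hkn⟩ ^ 2 := by simp only [hp, dif_pos hkn]
        have hgpos : 0 < g ⟨k+1, hk1⟩ := by
          rcases lt_or_eq_of_le (hgnn ⟨k+1, hk1⟩) with h | h
          · exact h
          · exfalso
            have : a k = p (k+1) - p k := rfl
            rw [hpk1, ← h] at this
            have hpknn : 0 ≤ p k := by rw [hpk]; positivity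
            rw [this] at hpos
            nlinarith
        have hsub : T k ⊆ univ.filter (fun v => 0 < f v) := by
          intro v hv
          have hv' : k < ((e.symm v : Fin n) : ℕ) := (Finset.mem_filter.1 hv).2
          simp only [Finset.mem_filter, Finset.mem_univ, true_and]
          have hle : (⟨k+1, hk1⟩ : Fin n) ≤ e.symm v := by
            rw [Fin.le_def]; exact hv'
          have h5 : g (e.symm v) = f v := by
            show f (e (e.symm v)) = f v
            rw [Equiv.apply_symm_apply]
          have := hmono hle
          linarith
        have hvolle : 2 * vol w (T k) ≤ vol w univ :=
          le_trans (by linarith [vol_mono w hsub]) hsupp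
        have hvpos : 0 < vol w (T k) := by
          rw [vol_eq_sum]
          refine Finset.sum_pos (fun v _ => hd v) ?_
          refine ⟨e ⟨k+1, hk1⟩, ?_⟩
          simp only [hT, Finset.mem_filter, Finset.mem_univ, true_and,
            Equiv.symm_apply_apply]
          omega
        have hcle := conductance_le w hvpos hvolle
        calc conductance w * (a k * vol w (T k))
            = a k * (conductance w * vol w (T k)) := by ring
          _ ≤ a k * cutVal w (T k) := mul_le_mul_of_nonneg_left hcle hanneg
    · have hTk : T k = ∅ := by
        refine Finset.eq_empty_of_forall_notMem fun v hv => ?_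
        have hv' : k < ((e.symm v : Fin n) : ℕ) := (Finset.mem_filter.1 hv).2
        have := (e.symm v).isLt
        omega
      have h1 : vol w (T k) = 0 := by rw [hTk]; simp [vol]
      have h2 : cutVal w (T k) = 0 := by rw [hTk]; simp [cutVal]
      rw [h1, h2]
      simp
  -- step6 : Abel resummation of the volume side
  have step6 : ∑ k ∈ range n, a k * vol w (T k) = chDen w f := by
    rw [Finset.sum_congr rfl fun k (_ : k ∈ range n) => by rw [volid k, Finset.mul_sum]]
    rw [Finset.sum_comm]
    have inner : ∀ j : Fin n,
        ∑ k ∈ range n, a k * (degRe w (e j) * (if k < (j:ℕ) then 1 else 0))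
        = degRe w (e j) * p (j:ℕ) := by
      intro j
      have h1 : ∑ k ∈ range n, a k * (if 0 ≤ k ∧ k < (j:ℕ) then 1 else 0)
          = p (j:ℕ) - p 0 := tele 0 j (Nat.zero_le _) j.isLt.le
      have h2 : ∑ k ∈ range n, a k * (degRe w (e j) * (if k < (j:ℕ) then 1 else 0))
          = degRe w (e j) * ∑ k ∈ range n, a k * (if 0 ≤ k ∧ k < (j:ℕ) then 1 else 0) := by
        rw [Finset.mul_sum]
        refine Finset.sum_congr rfl fun k _ => ?_
        have : (0 ≤ k ∧ k < (j:ℕ)) ↔ (k < (j:ℕ)) := by omega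
        rw [if_congr this rfl rfl]
        ring
      rw [h2, h1, hp0, sub_zero]
    rw [Finset.sum_congr rfl fun j (_ : j ∈ univ) => inner j]
    unfold chDen
    rw [← Equiv.sum_comp e (fun v => degRe w v * f v ^ 2)]
    refine Finset.sum_congr rfl fun j _ => ?_
    rw [hpFin]
  rw [← step6, Finset.mul_sum]
  rw [main]
  exact Finset.sum_le_sum step5

lemma chDen_nonneg (g : V → ℝ) : 0 ≤ chDen w g := by
  unfold chDen degRe; positivity

lemma cauchy (hsym : ∀ u v, w u v = w v u) (f : V → ℝ) (hf0 : ∀ v, 0 ≤ f v) :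
    ((1/2) * ∑ u, ∑ v, (w u v : ℝ) * |f u ^ 2 - f v ^ 2|)^2
      ≤ 2 * chNum w f * chDen w f := by
  classical
  set F : V × V → ℝ := fun p => Real.sqrt (w p.1 p.2) * |f p.1 - f p.2| with hF
  set G : V × V → ℝ := fun p => Real.sqrt (w p.1 p.2) * (f p.1 + f p.2) with hG
  have key := Finset.sum_mul_sq_le_sq_mul_sq (univ ×ˢ univ) F G
  have hFG : ∑ p ∈ univ ×ˢ univ, F p * G p
      = ∑ u, ∑ v, (w u v : ℝ) * |f u ^ 2 - f v ^ 2| := by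
    rw [Finset.sum_product]
    refine Finset.sum_congr rfl fun u _ => Finset.sum_congr rfl fun v _ => ?_
    have h1 : F (u, v) * G (u, v)
        = (Real.sqrt (w u v) * Real.sqrt (w u v)) * (|f u - f v| * (f u + f v)) := by
      simp only [hF, hG]; ring
    rw [h1, Real.mul_self_sqrt (by positivity)]
    congr 1
    have h2 : |f u ^ 2 - f v ^ 2| = |(f u - f v) * (f u + f v)| := by ring_nf
    rw [h2, abs_mul, abs_of_nonneg (by linarith [hf0 u, hf0 v] : 0 ≤ f u + f v)]
  have hF2 : ∑ p ∈ univ ×ˢ univ, F p ^ 2 = 2 * chNum w f := by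
    rw [Finset.sum_product]
    unfold chNum
    rw [← mul_assoc]
    norm_num
    refine Finset.sum_congr rfl fun u _ => Finset.sum_congr rfl fun v _ => ?_
    have : F (u, v) ^ 2 = Real.sqrt (w u v) ^ 2 * |f u - f v| ^ 2 := by
      simp only [hF]; ring
    rw [this, Real.sq_sqrt (by positivity), sq_abs]
  have hG2 : ∑ p ∈ univ ×ˢ univ, G p ^ 2 ≤ 4 * chDen w f := by
    have hle : ∀ u v : V, G (u, v) ^ 2
        ≤ 2 * ((w u v : ℝ) * f u ^ 2) + 2 * ((w u v : ℝ) * f v ^ 2) := by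
      intro u v
      have : G (u, v) ^ 2 = Real.sqrt (w u v) ^ 2 * (f u + f v) ^ 2 := by
        simp only [hG]; ring
      rw [this, Real.sq_sqrt (by positivity)]
      nlinarith [sq_nonneg (f u - f v), (by positivity : (0:ℝ) ≤ (w u v : ℝ))]
    calc ∑ p ∈ univ ×ˢ univ, G p ^ 2
        ≤ ∑ p ∈ univ ×ˢ univ, (2 * ((w p.1 p.2 : ℝ) * f p.1 ^ 2)
            + 2 * ((w p.1 p.2 : ℝ) * f p.2 ^ 2)) :=
          Finset.sum_le_sum fun p _ => hle p.1 p.2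
      _ = 4 * chDen w f := by
          rw [Finset.sum_product]
          have e0 : ∀ x : V, ∑ y, (2 * ((w x y:ℝ) * f x ^ 2) + 2 * ((w x y:ℝ) * f y ^ 2))
              = (∑ y, 2 * ((w x y:ℝ) * f x ^ 2)) + ∑ y, 2 * ((w x y:ℝ) * f y ^ 2) :=
            fun x => Finset.sum_add_distrib
          rw [Finset.sum_congr rfl fun x _ => e0 x, Finset.sum_add_distrib]
          have e1 : ∑ x : V, ∑ y : V, 2 * ((w x y:ℝ) * f x ^ 2) = 2 * chDen w f := by
            unfold chDen
            rw [Finset.mul_sum]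
            refine Finset.sum_congr rfl fun x _ => ?_
            calc ∑ y, 2 * ((w x y:ℝ) * f x ^ 2)
                = ∑ y, (w x y:ℝ) * (2 * f x ^ 2) :=
                  Finset.sum_congr rfl fun y _ => by ring
              _ = (∑ y, (w x y:ℝ)) * (2 * f x ^ 2) := (Finset.sum_mul _ _ _).symm
              _ = 2 * (degRe w x * f x ^ 2) := by rw [row_sum]; ring
          have e2 : ∑ x : V, ∑ y : V, 2 * ((w x y:ℝ) * f y ^ 2) = 2 * chDen w f := by
            rw [Finset.sum_comm]
            unfold chDen
            rw [Finset.mul_sum]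
            refine Finset.sum_congr rfl fun y _ => ?_
            calc ∑ x, 2 * ((w x y:ℝ) * f y ^ 2)
                = ∑ x, (w x y:ℝ) * (2 * f y ^ 2) :=
                  Finset.sum_congr rfl fun x _ => by ring
              _ = (∑ x, (w x y:ℝ)) * (2 * f y ^ 2) := (Finset.sum_mul _ _ _).symm
              _ = 2 * (degRe w y * f y ^ 2) := by rw [col_sum w hsym]; ring
          rw [e1, e2]
          ring
  rw [← hFG]
  have h1 : (∑ p ∈ univ ×ˢ univ, F p * G p)^2 ≤ (2 * chNum w f) * (4 * chDen w f) := by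
    refine le_trans key ?_
    rw [hF2]
    exact mul_le_mul_of_nonneg_left hG2 (by rw [← hF2]; positivity)
  nlinarith [h1]

lemma sq_split (a b : ℝ) :
    (max a 0 - max b 0)^2 + (max (-a) 0 - max (-b) 0)^2 ≤ (a - b)^2 := by
  rcases le_total a 0 with ha | ha <;> rcases le_total b 0 with hb | hb
  · rw [max_eq_right ha, max_eq_right hb, max_eq_left (by linarith),
      max_eq_left (by linarith)]
    nlinarith
  · rw [max_eq_right ha, max_eq_left hb, max_eq_left (by linarith),
      max_eq_right (by linarith)]
    nlinarith
  · rw [max_eq_left ha, max_eq_right hb, max_eq_right (by linarith),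
      max_eq_left (by linarith)]
    nlinarith
  · rw [max_eq_left ha, max_eq_left hb, max_eq_right (by linarith),
      max_eq_right (by linarith)]
    nlinarith

lemma sq_decomp (a : ℝ) : max a 0 ^ 2 + max (-a) 0 ^ 2 = a ^ 2 := by
  rcases le_total a 0 with ha | ha
  · rw [max_eq_right ha, max_eq_left (by linarith)]; ring
  · rw [max_eq_left ha, max_eq_right (by linarith)]; ring

variable (w : V → V → ℕ)

lemma chNum_split (h : V → ℝ) :
    chNum w (fun v => max (h v) 0) + chNum w (fun v => max (-h v) 0) ≤ chNum w h := by
  unfold chNum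
  rw [← mul_add]
  have := fun (u v : V) => sq_split (h u) (h v)
  have key : ∀ u v : V,
      (w u v : ℝ) * (max (h u) 0 - max (h v) 0)^2
        + (w u v : ℝ) * (max (-h u) 0 - max (-h v) 0)^2
      ≤ (w u v : ℝ) * (h u - h v)^2 := by
    intro u v
    have h1 := sq_split (h u) (h v)
    nlinarith [h1, (by positivity : (0:ℝ) ≤ (w u v : ℝ)),
      sq_nonneg (max (h u) 0 - max (h v) 0), sq_nonneg (max (-h u) 0 - max (-h v) 0)]
  have hsum : (∑ u, ∑ v, (w u v : ℝ) * (max (h u) 0 - max (h v) 0)^2)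
      + (∑ u, ∑ v, (w u v : ℝ) * (max (-h u) 0 - max (-h v) 0)^2)
      ≤ ∑ u, ∑ v, (w u v : ℝ) * (h u - h v)^2 := by
    rw [← Finset.sum_add_distrib]
    refine Finset.sum_le_sum fun u _ => ?_
    rw [← Finset.sum_add_distrib]
    exact Finset.sum_le_sum fun v _ => key u v
  linarith

lemma chDen_split (h : V → ℝ) :
    chDen w (fun v => max (h v) 0) + chDen w (fun v => max (-h v) 0) = chDen w h := by
  unfold chDen
  rw [← Finset.sum_add_distrib]
  refine Finset.sum_congr rfl fun v _ => ?_
  rw [← mul_add, sq_decomp]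

lemma chDen_zero_forall (hd : ∀ v, 0 < degRe w v) {f : V → ℝ}
    (h : chDen w f = 0) : ∀ v, f v = 0 := by
  intro v
  have hterm : ∀ u ∈ univ, (0:ℝ) ≤ degRe w u * f u ^ 2 := by
    intro u _
    have := (hd u).le
    positivity
  have := (Finset.sum_eq_zero_iff_of_nonneg hterm).1 h v (Finset.mem_univ v)
  rcases mul_eq_zero.1 this with h1 | h1
  · exact absurd h1 (hd v).ne'
  · nlinarith [sq_abs (f v), abs_nonneg (f v), h1, sq_nonneg (f v + 1), sq_nonneg (f v - 1)]

end chAux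

/-- Cheeger's inequality for multigraphs: for a finite connected multigraph, the spectral
gap `λ` of the normalized Laplacian and the conductance `φ` satisfy `λ ≥ φ²/2`. -/
theorem cheeger_multigraph {V : Type} [Fintype V] [DecidableEq V]
    (w : V → V → ℕ) (hsym : ∀ u v, w u v = w v u)
    (G : SimpleGraph V) (hG : ∀ u v, G.Adj u v ↔ u ≠ v ∧ 0 < w u v)
    (hconn : G.Connected)
    (hL : (normLap w).IsHermitian) :
    conductance w ^ 2 / 2 ≤ secondSmallest hL := by
  classical
  have hVne : Nonempty V := hconn.nonempty
  rcases Nat.lt_or_ge (Fintype.card V) 2 with hcard | hcard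
  · -- one-vertex case
    have hc1 : Fintype.card V = 1 := by
      have := Fintype.card_pos (α := V); omega
    have hcond : conductance w = 0 := by
      have hset : {r | ∃ S : Finset V, 0 < vol w S ∧ 2 * vol w S ≤ vol w Finset.univ ∧
          r = cutVal w S / vol w S} = ∅ := by
        ext r
        simp only [Set.mem_setOf_eq, Set.mem_empty_iff_false, iff_false]
        rintro ⟨S, h1, h2, -⟩
        rcases Finset.eq_empty_or_nonempty S with rfl | hne
        · simp [vol] at h1
        · have hSu : S = Finset.univ := by
            apply Finset.eq_univ_of_card
            have hle := Finset.card_le_univ S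
            have hpos := Finset.card_pos.2 hne
            omega
          rw [hSu] at h1 h2
          linarith
      rw [conductance, hset, Real.sInf_empty]
    have hss : secondSmallest hL = 0 := by
      unfold secondSmallest
      apply List.getD_eq_default
      rw [Multiset.length_sort, Multiset.card_map]
      show Finset.univ.card ≤ 1
      rw [Finset.card_univ, hc1]
    rw [hcond, hss]
    norm_num
  · -- main case
    have hd : ∀ v, 0 < degRe w v := by
      intro v
      obtain ⟨u, hu⟩ : ∃ u, G.Adj v u := by
        obtain ⟨u, hne⟩ := Fintype.exists_ne_of_one_lt_card (by omega) v
        obtain ⟨p⟩ := hconn v u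
        cases p with
        | nil => exact absurd rfl hne
        | cons h q => exact ⟨_, h⟩
      have hw : 0 < w v u := ((hG v u).1 hu).2
      have hle : (w v u : ℝ) ≤ ∑ u', (w v u' : ℝ) :=
        Finset.single_le_sum (f := fun u' => (w v u' : ℝ))
          (fun i _ => by positivity) (Finset.mem_univ u)
      have : (0:ℝ) < (w v u : ℝ) := by exact_mod_cast hw
      unfold degRe
      linarith
    set μ := secondSmallest hL with hμ
    obtain ⟨x, hx0, hxorth, hxQ⟩ := chAux.exists_test hL hcard
      (fun v => Real.sqrt (degRe w v))
    set g : V → ℝ := fun v => x v / Real.sqrt (degRe w v) with hgdef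
    have hnum_g : chAux.chNum w g ≤ μ * chAux.chDen w g := by
      have h1 := chAux.quadform w hsym hd x
      have h2 := chAux.chDen_eq w hd x
      rw [hgdef, h2, ← h1]
      exact hxQ
    have hden_g_pos : 0 < chAux.chDen w g := by
      rw [hgdef, chAux.chDen_eq w hd x]
      obtain ⟨v0, hv0⟩ : ∃ v, x v ≠ 0 := by
        by_contra hcon; push_neg at hcon; exact hx0 (funext fun v => hcon v)
      exact Finset.sum_pos' (fun v _ => sq_nonneg _)
        ⟨v0, Finset.mem_univ _, by positivity⟩
    have hsum_dg : ∑ v, degRe w v * g v = 0 := by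
      rw [← hxorth]
      refine Finset.sum_congr rfl fun v _ => ?_
      show degRe w v * (x v / Real.sqrt (degRe w v)) = Real.sqrt (degRe w v) * x v
      rw [mul_div_assoc', mul_comm (degRe w v) (x v), mul_div_assoc, Real.div_sqrt]
      ring
    obtain ⟨c, hcup, hclow⟩ := chAux.exists_median w g
    set h : V → ℝ := fun v => g v - c with hhdef
    have hnum_h : chAux.chNum w h = chAux.chNum w g := by
      unfold chAux.chNum
      congr 1
      refine Finset.sum_congr rfl fun u _ => Finset.sum_congr rfl fun v _ => ?_
      show (w u v : ℝ) * ((g u - c) - (g v - c))^2 = _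
      ring_nf
    have hden_h : chAux.chDen w h = chAux.chDen w g + c^2 * vol w Finset.univ := by
      unfold chAux.chDen
      have hterm : ∀ v : V, degRe w v * h v ^ 2
          = degRe w v * g v ^ 2 + c^2 * degRe w v - 2*c*(degRe w v * g v) := by
        intro v
        show degRe w v * (g v - c)^2 = _
        ring
      rw [Finset.sum_congr rfl fun v _ => hterm v]
      rw [Finset.sum_sub_distrib, Finset.sum_add_distrib, ← Finset.mul_sum,
        ← Finset.mul_sum, hsum_dg, chAux.vol_eq_sum]
      ring
    have hmu0 : 0 ≤ μ := by
      nlinarith [chAux.chNum_nonneg w g, hnum_g, hden_g_pos]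
    have hden_h_ge : chAux.chDen w g ≤ chAux.chDen w h := by
      rw [hden_h]
      nlinarith [chAux.vol_nonneg w (Finset.univ : Finset V), sq_nonneg c]
    have hden_h_pos : 0 < chAux.chDen w h := lt_of_lt_of_le hden_g_pos hden_h_ge
    have hnum_h_le : chAux.chNum w h ≤ μ * chAux.chDen w h := by
      rw [hnum_h]
      calc chAux.chNum w g ≤ μ * chAux.chDen w g := hnum_g
        _ ≤ μ * chAux.chDen w h := mul_le_mul_of_nonneg_left hden_h_ge hmu0
    set f1 : V → ℝ := fun v => max (h v) 0 with hf1def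
    set f2 : V → ℝ := fun v => max (-h v) 0 with hf2def
    have hsplitnum : chAux.chNum w f1 + chAux.chNum w f2 ≤ chAux.chNum w h :=
      chAux.chNum_split w h
    have hsplitden : chAux.chDen w f1 + chAux.chDen w f2 = chAux.chDen w h :=
      chAux.chDen_split w h
    have hsupp1 : 2 * vol w (Finset.univ.filter fun v => 0 < f1 v) ≤ vol w Finset.univ := by
      have heq : (Finset.univ.filter fun v => 0 < f1 v)
          = (Finset.univ.filter fun v => c < g v) := by
        ext v
        simp only [Finset.mem_filter, Finset.mem_univ, true_and, hf1def, hhdef,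
          lt_max_iff, sub_pos]
        constructor
        · rintro (hh | hh)
          · exact hh
          · exact absurd hh (lt_irrefl 0)
        · exact fun hh => Or.inl hh
      rw [heq]; exact hcup
    have hsupp2 : 2 * vol w (Finset.univ.filter fun v => 0 < f2 v) ≤ vol w Finset.univ := by
      have heq : (Finset.univ.filter fun v => 0 < f2 v)
          = (Finset.univ.filter fun v => g v < c) := by
        ext v
        simp only [Finset.mem_filter, Finset.mem_univ, true_and, hf2def, hhdef,
          lt_max_iff, neg_sub, sub_pos]
        constructor
        · rintro (hh | hh)
          · exact hh
          · exact absurd hh (lt_irrefl 0)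
        · exact fun hh => Or.inl hh
      rw [heq]; exact hclow
    obtain ⟨f, hf0, hfsupp, hfnum, hfden⟩ : ∃ f : V → ℝ, (∀ v, 0 ≤ f v)
        ∧ (2 * vol w (Finset.univ.filter fun v => 0 < f v) ≤ vol w Finset.univ)
        ∧ chAux.chNum w f ≤ μ * chAux.chDen w f ∧ 0 < chAux.chDen w f := by
      by_cases hz1 : chAux.chDen w f1 = 0
      · have hzero1 : ∀ v, f1 v = 0 := chAux.chDen_zero_forall w hd hz1
        have hnum1 : chAux.chNum w f1 = 0 := by
          unfold chAux.chNum
          have hz : ∀ u v : V, (w u v:ℝ) * (f1 u - f1 v)^2 = 0 := by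
            intro u v; rw [hzero1 u, hzero1 v]; ring
          rw [Finset.sum_congr rfl fun u _ => Finset.sum_congr rfl fun v _ => hz u v]
          simp
        refine ⟨f2, fun v => le_max_right _ _, hsupp2, ?_, ?_⟩
        · have hle2 := hnum_h_le
          rw [← hsplitden, hz1, zero_add] at hle2
          linarith [hnum1, hsplitnum]
        · rw [← hsplitden, hz1, zero_add] at hden_h_pos
          exact hden_h_pos
      · by_cases h1 : chAux.chNum w f1 ≤ μ * chAux.chDen w f1
        · refine ⟨f1, fun v => le_max_right _ _, hsupp1, h1, ?_⟩
          exact lt_of_le_of_ne (chAux.chDen_nonneg w f1) (Ne.symm hz1)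
        · push_neg at h1
          refine ⟨f2, fun v => le_max_right _ _, hsupp2, ?_, ?_⟩
          · nlinarith [hsplitnum, hsplitden, hnum_h_le]
          · by_contra hcon
            push_neg at hcon
            have hz2 : chAux.chDen w f2 = 0 :=
              le_antisymm hcon (chAux.chDen_nonneg w f2)
            have hzero2 : ∀ v, f2 v = 0 := chAux.chDen_zero_forall w hd hz2
            have hnum2 : chAux.chNum w f2 = 0 := by
              unfold chAux.chNum
              have hz : ∀ u v : V, (w u v:ℝ) * (f2 u - f2 v)^2 = 0 := by
                intro u v; rw [hzero2 u, hzero2 v]; ring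
              rw [Finset.sum_congr rfl fun u _ => Finset.sum_congr rfl fun v _ => hz u v]
              simp
            rw [← hsplitden, hz2, add_zero] at hnum_h_le
            nlinarith [hsplitnum, chAux.chNum_nonneg w f2]
    have hs := chAux.sweep w hsym hd f hf0 hfsupp
    have hcs := chAux.cauchy w hsym f hf0
    have hphi : 0 ≤ conductance w := chAux.conductance_nonneg w
    have hMnn : 0 ≤ conductance w * chAux.chDen w f :=
      mul_nonneg hphi (chAux.chDen_nonneg w f)
    have h1 : (conductance w * chAux.chDen w f)^2
        ≤ 2 * chAux.chNum w f * chAux.chDen w f :=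
      le_trans (pow_le_pow_left₀ hMnn hs 2) hcs
    have final : conductance w ^ 2 ≤ 2 * μ := by
      nlinarith [h1, mul_le_mul_of_nonneg_right hfnum hfden.le,
        mul_pos hfden hfden]
    linarith
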